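/- Fix finite sets and the setup of the main theorem. Suppose the follower's history-based best-response strategy σ̂^f = BR^f(σ̃_{1:t-1}^l σ_t^l σ̃_{t+1:T}^l) satisfies the property that, at every time n ≥ t+1, the continuation game value from the follower's perspective satisfies the backward-recursion value identity (Lemma 1) and strategy-independence (Lemma 3). Then the stage-t prescription-based best-response value coincides with the history-based best-response value: max over prescriptions γ_t^f(·|x_t^f) of E^{γ_t^f(·|x_t^f) γ_t^l, π_t}[ R_t^f(X_t, A_t) + δ V_{t+1}^f(F(π_t, γ_t^l γ̃_t^f, A_t), X_{t+1}^f) | π_t, x_t^f ] equals max over full continuation strategies σ_{t:T}^f of E^{σ̃_{1:t-1}^l σ_t^l σ̃_{t+1:T}^l, σ̂_{1:t-1}^f σ_{t:T}^f}[ Σ_{n=t}^T δ^{n−t} R_n^f(X_n, A_n) | h_t^f ], where π_t(x_t) = P^{σ̃_{1:t-1}^l σ_t^l, σ̂_{1:t}^f}(x_t | a_{1:t-1}). -/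

import Mathlib

open Finset

noncomputable section

def upd {α : Type} (h : ℕ → α) (t : ℕ) (v : α) : ℕ → α :=
  fun n => if n = t then v else h n

/-- Discounted follower reward-to-go over `k` remaining stages from time `t` (discount δ). -/
def rtgFd {Xl Xf Al Af : Type} [Fintype Xl] [Fintype Xf] [Fintype Al] [Fintype Af]
    (σl : ℕ → (ℕ → Al × Af) → Xl → Al → ℝ)
    (σf : ℕ → (ℕ → Al × Af) → (ℕ → Xf) → Af → ℝ)
    (Ql : Xl → Al × Af → Xl → ℝ) (Qf : Xf → Al × Af → Xf → ℝ)
    (Rf : ℕ → Xl × Xf → Al × Af → ℝ) (δ : ℝ) :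
    ℕ → ℕ → (ℕ → Al × Af) → (ℕ → Xf) → Xl → ℝ
  | 0, _, _, _, _ => 0
  | k + 1, t, a, xfh, xl =>
      ∑ al : Al, ∑ af : Af, σl t a xl al * σf t a xfh af *
        (Rf t (xl, xfh t) (al, af) +
          δ * ∑ xl' : Xl, ∑ xf' : Xf, Ql xl (al, af) xl' * Qf (xfh t) (al, af) xf' *
            rtgFd σl σf Ql Qf Rf δ k (t + 1) (upd a t (al, af)) (upd xfh (t + 1) xf') xl')

lemma rtgFd_succ {Xl Xf Al Af : Type} [Fintype Xl] [Fintype Xf] [Fintype Al] [Fintype Af]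
    (σl : ℕ → (ℕ → Al × Af) → Xl → Al → ℝ)
    (σf : ℕ → (ℕ → Al × Af) → (ℕ → Xf) → Af → ℝ)
    (Ql : Xl → Al × Af → Xl → ℝ) (Qf : Xf → Al × Af → Xf → ℝ)
    (Rf : ℕ → Xl × Xf → Al × Af → ℝ) (δ : ℝ) (k t : ℕ) (a : ℕ → Al × Af)
    (xfh : ℕ → Xf) (xl : Xl) :
    rtgFd σl σf Ql Qf Rf δ (k+1) t a xfh xl =
      ∑ al : Al, ∑ af : Af, σl t a xl al * σf t a xfh af *
        (Rf t (xl, xfh t) (al, af) +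
          δ * ∑ xl' : Xl, ∑ xf' : Xf, Ql xl (al, af) xl' * Qf (xfh t) (al, af) xf' *
            rtgFd σl σf Ql Qf Rf δ k (t + 1) (upd a t (al, af)) (upd xfh (t + 1) xf') xl') := rfl

lemma rtgFd_congr {Xl Xf Al Af : Type} [Fintype Xl] [Fintype Xf] [Fintype Al] [Fintype Af]
    (σl σl' : ℕ → (ℕ → Al × Af) → Xl → Al → ℝ)
    (σf σf' : ℕ → (ℕ → Al × Af) → (ℕ → Xf) → Af → ℝ)
    (Ql : Xl → Al × Af → Xl → ℝ) (Qf : Xf → Al × Af → Xf → ℝ)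
    (Rf : ℕ → Xl × Xf → Al × Af → ℝ) (δ : ℝ) :
    ∀ (k n : ℕ), (∀ m, n ≤ m → σl m = σl' m) → (∀ m, n ≤ m → σf m = σf' m) →
    ∀ a xfh xl, rtgFd σl σf Ql Qf Rf δ k n a xfh xl = rtgFd σl' σf' Ql Qf Rf δ k n a xfh xl := by
  intro k
  induction k with
  | zero => intro n _ _ a xfh xl; rfl
  | succ k ih =>
    intro n hl hf a xfh xl
    rw [rtgFd_succ, rtgFd_succ]
    refine Finset.sum_congr rfl fun al _ => Finset.sum_congr rfl fun af _ => ?_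
    rw [hl n le_rfl, hf n le_rfl]
    have h2 : (∑ xl' : Xl, ∑ xf' : Xf, Ql xl (al, af) xl' * Qf (xfh n) (al, af) xf' *
            rtgFd σl σf Ql Qf Rf δ k (n + 1) (upd a n (al, af)) (upd xfh (n + 1) xf') xl')
        = ∑ xl' : Xl, ∑ xf' : Xf, Ql xl (al, af) xl' * Qf (xfh n) (al, af) xf' *
            rtgFd σl' σf' Ql Qf Rf δ k (n + 1) (upd a n (al, af)) (upd xfh (n + 1) xf') xl' := by
      refine Finset.sum_congr rfl fun xl' _ => Finset.sum_congr rfl fun xf' _ => ?_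
      rw [ih (n+1) (fun m hm => hl m (by omega)) (fun m hm => hf m (by omega))]
    rw [h2]

lemma sum_comm3 {α β γ : Type} [Fintype α] [Fintype β] [Fintype γ] (f : α → β → γ → ℝ) :
    ∑ a, ∑ b, ∑ c, f a b c = ∑ c, ∑ a, ∑ b, f a b c := by
  calc ∑ a, ∑ b, ∑ c, f a b c = ∑ a, ∑ c, ∑ b, f a b c :=
        Finset.sum_congr rfl fun a _ => Finset.sum_comm
    _ = ∑ c, ∑ a, ∑ b, f a b c := Finset.sum_comm

lemma rearrange {Xl Al Af Xf : Type} [Fintype Xl] [Fintype Al] [Fintype Af] [Fintype Xf]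
    (δ : ℝ) (f : Xl → ℝ) (g : Xl → Al → ℝ) (s : Af → ℝ) (R : Xl → Al → Af → ℝ)
    (P : Xl → Al → Af → Xl → ℝ) (Q : Al → Af → Xf → ℝ) (G : Al → Af → Xf → Xl → ℝ) :
    ∑ xl, f xl * ∑ al, ∑ af, g xl al * s af *
        (R xl al af + δ * ∑ xl', ∑ xf', P xl al af xl' * Q al af xf' * G al af xf' xl')
      = ∑ al, ∑ af, s af * ((∑ xl, f xl * g xl al * R xl al af)
          + δ * ∑ xf', Q al af xf' *
              (∑ xl, ∑ xl', f xl * g xl al * P xl al af xl' * G al af xf' xl')) := by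
  simp only [Finset.mul_sum, Finset.sum_mul, mul_add, Finset.sum_add_distrib]
  congr 1
  · rw [Finset.sum_comm]
    refine Finset.sum_congr rfl fun al _ => ?_
    rw [Finset.sum_comm]
    exact Finset.sum_congr rfl fun af _ => Finset.sum_congr rfl fun xl _ => by ring
  · rw [Finset.sum_comm]
    refine Finset.sum_congr rfl fun al _ => ?_
    rw [Finset.sum_comm]
    refine Finset.sum_congr rfl fun af _ => ?_
    rw [sum_comm3 (fun xl xl' xf' => f xl * (g xl al * s af *
      (δ * (P xl al af xl' * Q al af xf' * G al af xf' xl'))))]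
    exact Finset.sum_congr rfl fun xf' _ => Finset.sum_congr rfl fun xl _ =>
      Finset.sum_congr rfl fun xl' _ => by ring

lemma rearrange2 {Xl Al Af Xf : Type} [Fintype Xl] [Fintype Al] [Fintype Af] [Fintype Xf]
    (δ : ℝ) (f : Xl → ℝ) (g : Xl → Al → ℝ) (q : Af → ℝ) (R : Xl → Al → Af → ℝ)
    (Q : Al → Af → Xf → ℝ) (Vv : Al → Af → Xf → ℝ) :
    ∑ xl, ∑ al, ∑ af, f xl * g xl al * q af *
        (R xl al af + δ * ∑ xf', Q al af xf' * Vv al af xf')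
      = ∑ al, ∑ af, q af * ((∑ xl, f xl * g xl al * R xl al af)
          + δ * ∑ xf', Q al af xf' * ((∑ xl, f xl * g xl al) * Vv al af xf')) := by
  calc ∑ xl, ∑ al, ∑ af, f xl * g xl al * q af *
        (R xl al af + δ * ∑ xf', Q al af xf' * Vv al af xf')
      = ∑ af, ∑ xl, ∑ al, f xl * g xl al * q af *
          (R xl al af + δ * ∑ xf', Q al af xf' * Vv al af xf') := sum_comm3 _
    _ = ∑ al, ∑ af, ∑ xl, f xl * g xl al * q af *
          (R xl al af + δ * ∑ xf', Q al af xf' * Vv al af xf') := sum_comm3 _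
    _ = ∑ al, ∑ af, q af * ((∑ xl, f xl * g xl al * R xl al af)
          + δ * ∑ xf', Q al af xf' * ((∑ xl, f xl * g xl al) * Vv al af xf')) := by
        refine Finset.sum_congr rfl fun al _ => Finset.sum_congr rfl fun af _ => ?_
        simp only [mul_add, Finset.sum_add_distrib, Finset.mul_sum, Finset.sum_mul]
        congr 1
        · exact Finset.sum_congr rfl fun xl _ => by ring
        · rw [Finset.sum_comm]
          exact Finset.sum_congr rfl fun xf' _ => Finset.sum_congr rfl fun xl _ => by ring

/-- the follower's one-stage optimization over type-dependent prescriptions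
(with the backward-recursion continuation value) achieves the same optimum as the full
dynamic optimization over all history-dependent continuation strategies, given the leader's
time-`t` prescription `γl` embedded in the equilibrium leader strategy `σtl` at all other
times.  Hypotheses: `hval` is the value identity (Lemma 1) linking `V_{t+1}` to the
equilibrium reward-to-go, `hind` is strategy-independence of continuation measures (Lemma 3,
multiplicative form), and `hopt` is sequential optimality of the equilibrium follower
strategy `σtf` from time `t+1` on. -/
theorem prescription_value_equals_strategy_value
    {Xl Xf Al Af : Type} [Fintype Xl] [Fintype Xf] [Fintype Al] [Fintype Af] [Nonempty Af]
    (T t : ℕ) (ht : t < T)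
    (σtl : ℕ → (ℕ → Al × Af) → Xl → Al → ℝ)
    (σtf : ℕ → (ℕ → Al × Af) → (ℕ → Xf) → Af → ℝ)
    (γl : Xl → Al → ℝ)
    (Ql : Xl → Al × Af → Xl → ℝ) (Qf : Xf → Al × Af → Xf → ℝ)
    (Rf : ℕ → Xl × Xf → Al × Af → ℝ) (δ : ℝ) (hδ0 : 0 ≤ δ) (hδ1 : δ ≤ 1)
    (μ : ℕ → (ℕ → Al × Af) → Xl → ℝ)
    (V : ℕ → (ℕ → Al × Af) → Xf → ℝ)
    (a : ℕ → Al × Af) (xfh : ℕ → Xf)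
    -- probability hypotheses
    (hμ : ∀ n a', (∀ xl, 0 ≤ μ n a' xl) ∧ ∑ xl, μ n a' xl = 1)
    (hσtl : ∀ n a' xl, (∀ al, 0 ≤ σtl n a' xl al) ∧ ∑ al, σtl n a' xl al = 1)
    (hσtf : ∀ n a' xfh', (∀ af, 0 ≤ σtf n a' xfh' af) ∧ ∑ af, σtf n a' xfh' af = 1)
    (hγl : ∀ xl, (∀ al, 0 ≤ γl xl al) ∧ ∑ al, γl xl al = 1)
    (hQl : ∀ x u, (∀ x', 0 ≤ Ql x u x') ∧ ∑ x', Ql x u x' = 1)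
    (hQf : ∀ x u, (∀ x', 0 ≤ Qf x u x') ∧ ∑ x', Qf x u x' = 1)
    -- Lemma 1: V_{t+1} equals the equilibrium reward-to-go restarted from μ_{t+1}
    (hval : ∀ (a' : ℕ → Al × Af) (xfh' : ℕ → Xf),
      V (t + 1) a' (xfh' (t + 1))
        = ∑ xl', μ (t + 1) a' xl' *
            rtgFd σtl σtf Ql Qf Rf δ (T - (t + 1)) (t + 1) a' xfh' xl')
    -- Lemma 3: strategy-independence / belief consistency at time t (multiplicative form)
    (hind : ∀ (σf : ℕ → (ℕ → Al × Af) → (ℕ → Xf) → Af → ℝ) (al : Al) (af : Af)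
        (xf' : Xf),
      (∑ xl, ∑ xl', μ t a xl * γl xl al * Ql xl (al, af) xl' *
          rtgFd σtl σf Ql Qf Rf δ (T - (t + 1)) (t + 1)
            (upd a t (al, af)) (upd xfh (t + 1) xf') xl')
        = (∑ xl, μ t a xl * γl xl al) *
          ∑ xl', μ (t + 1) (upd a t (al, af)) xl' *
            rtgFd σtl σf Ql Qf Rf δ (T - (t + 1)) (t + 1)
              (upd a t (al, af)) (upd xfh (t + 1) xf') xl')
    -- the equilibrium follower strategy is optimal from time t+1 on
    (hopt : ∀ (σf : ℕ → (ℕ → Al × Af) → (ℕ → Xf) → Af → ℝ),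
      (∀ n a' xfh', (∀ af, 0 ≤ σf n a' xfh' af) ∧ ∑ af, σf n a' xfh' af = 1) →
      ∀ (a' : ℕ → Al × Af) (xfh' : ℕ → Xf),
        (∑ xl', μ (t + 1) a' xl' *
            rtgFd σtl σf Ql Qf Rf δ (T - (t + 1)) (t + 1) a' xfh' xl')
          ≤ ∑ xl', μ (t + 1) a' xl' *
              rtgFd σtl σtf Ql Qf Rf δ (T - (t + 1)) (t + 1) a' xfh' xl') :
    -- conclusion: the two optima coincide
    sSup {r : ℝ | ∃ q : Af → ℝ, ((∀ af, 0 ≤ q af) ∧ ∑ af, q af = 1) ∧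
        r = ∑ xl : Xl, ∑ al : Al, ∑ af : Af,
          μ t a xl * γl xl al * q af *
            (Rf t (xl, xfh t) (al, af) +
              δ * ∑ xf' : Xf, Qf (xfh t) (al, af) xf' *
                V (t + 1) (upd a t (al, af)) xf')}
      = sSup {r : ℝ | ∃ σf : ℕ → (ℕ → Al × Af) → (ℕ → Xf) → Af → ℝ,
          (∀ n a' xfh', (∀ af, 0 ≤ σf n a' xfh' af) ∧ ∑ af, σf n a' xfh' af = 1) ∧
          r = ∑ xl, μ t a xl *
            rtgFd (fun n a' xl al => if n = t then γl xl al else σtl n a' xl al)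
              σf Ql Qf Rf δ (T - t) t a xfh xl} := by
  classical
  -- abbreviations
  set σl' : ℕ → (ℕ → Al × Af) → Xl → Al → ℝ :=
    (fun n a' xl al => if n = t then γl xl al else σtl n a' xl al) with hσl'
  have hTt : T - t = (T - (t + 1)) + 1 := by omega
  -- the per-(al,af) coefficient
  obtain ⟨c, hc⟩ : ∃ c : Al → Af → ℝ, c = fun al af =>
      (∑ xl, μ t a xl * γl xl al * Rf t (xl, xfh t) (al, af)) +
        δ * ∑ xf', Qf (xfh t) (al, af) xf' *
          ((∑ xl, μ t a xl * γl xl al) * V (t + 1) (upd a t (al, af)) xf') := ⟨_, rfl⟩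
  -- Lemma 1 reformulated: continuation value of σtf equals V
  have hW : ∀ (al : Al) (af : Af) (xf' : Xf),
      (∑ xl', μ (t + 1) (upd a t (al, af)) xl' *
          rtgFd σtl σtf Ql Qf Rf δ (T - (t + 1)) (t + 1)
            (upd a t (al, af)) (upd xfh (t + 1) xf') xl')
        = V (t + 1) (upd a t (al, af)) xf' := by
    intro al af xf'
    have h := hval (upd a t (al, af)) (upd xfh (t + 1) xf')
    have hupd : upd xfh (t + 1) xf' (t + 1) = xf' := if_pos rfl
    rw [hupd] at h
    exact h.symm
  -- main value computation
  have hVal : ∀ (σf : ℕ → (ℕ → Al × Af) → (ℕ → Xf) → Af → ℝ),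
      (∑ xl, μ t a xl * rtgFd σl' σf Ql Qf Rf δ (T - t) t a xfh xl)
        = ∑ al, ∑ af, σf t a xfh af *
            ((∑ xl, μ t a xl * γl xl al * Rf t (xl, xfh t) (al, af)) +
              δ * ∑ xf', Qf (xfh t) (al, af) xf' *
                ((∑ xl, μ t a xl * γl xl al) *
                  ∑ xl', μ (t + 1) (upd a t (al, af)) xl' *
                    rtgFd σtl σf Ql Qf Rf δ (T - (t + 1)) (t + 1)
                      (upd a t (al, af)) (upd xfh (t + 1) xf') xl')) := by
    intro σf
    have h1 : ∀ xl, rtgFd σl' σf Ql Qf Rf δ (T - t) t a xfh xl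
        = ∑ al, ∑ af, γl xl al * σf t a xfh af *
            (Rf t (xl, xfh t) (al, af) +
              δ * ∑ xl', ∑ xf', Ql xl (al, af) xl' * Qf (xfh t) (al, af) xf' *
                rtgFd σtl σf Ql Qf Rf δ (T - (t + 1)) (t + 1)
                  (upd a t (al, af)) (upd xfh (t + 1) xf') xl') := by
      intro xl
      rw [hTt, rtgFd_succ]
      refine Finset.sum_congr rfl fun al _ => Finset.sum_congr rfl fun af _ => ?_
      have hσl't : σl' t a xl al = γl xl al := if_pos rfl
      rw [hσl't]
      have h2 : (∑ xl' : Xl, ∑ xf' : Xf, Ql xl (al, af) xl' * Qf (xfh t) (al, af) xf' *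
              rtgFd σl' σf Ql Qf Rf δ (T - (t + 1)) (t + 1)
                (upd a t (al, af)) (upd xfh (t + 1) xf') xl')
          = ∑ xl' : Xl, ∑ xf' : Xf, Ql xl (al, af) xl' * Qf (xfh t) (al, af) xf' *
              rtgFd σtl σf Ql Qf Rf δ (T - (t + 1)) (t + 1)
                (upd a t (al, af)) (upd xfh (t + 1) xf') xl' := by
        refine Finset.sum_congr rfl fun xl' _ => Finset.sum_congr rfl fun xf' _ => ?_
        rw [rtgFd_congr σl' σtl σf σf Ql Qf Rf δ (T - (t + 1)) (t + 1)
          (fun m hm => by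
            funext a' xl'' al''
            exact if_neg (by omega))
          (fun m _ => rfl)]
      rw [h2]
    calc (∑ xl, μ t a xl * rtgFd σl' σf Ql Qf Rf δ (T - t) t a xfh xl)
        = ∑ xl, μ t a xl * ∑ al, ∑ af, γl xl al * σf t a xfh af *
            (Rf t (xl, xfh t) (al, af) +
              δ * ∑ xl', ∑ xf', Ql xl (al, af) xl' * Qf (xfh t) (al, af) xf' *
                rtgFd σtl σf Ql Qf Rf δ (T - (t + 1)) (t + 1)
                  (upd a t (al, af)) (upd xfh (t + 1) xf') xl') :=
          Finset.sum_congr rfl fun xl _ => by rw [h1 xl]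
      _ = ∑ al, ∑ af, σf t a xfh af *
            ((∑ xl, μ t a xl * γl xl al * Rf t (xl, xfh t) (al, af)) +
              δ * ∑ xf', Qf (xfh t) (al, af) xf' *
                (∑ xl, ∑ xl', μ t a xl * γl xl al * Ql xl (al, af) xl' *
                  rtgFd σtl σf Ql Qf Rf δ (T - (t + 1)) (t + 1)
                    (upd a t (al, af)) (upd xfh (t + 1) xf') xl')) :=
          rearrange δ (μ t a) γl (σf t a xfh)
            (fun xl al af => Rf t (xl, xfh t) (al, af))
            (fun xl al af xl' => Ql xl (al, af) xl')
            (fun al af xf' => Qf (xfh t) (al, af) xf')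
            (fun al af xf' xl' => rtgFd σtl σf Ql Qf Rf δ (T - (t + 1)) (t + 1)
              (upd a t (al, af)) (upd xfh (t + 1) xf') xl')
      _ = _ := by simp only [hind σf]
  -- prescription value rearranged
  have hPq : ∀ q : Af → ℝ,
      (∑ xl : Xl, ∑ al : Al, ∑ af : Af,
          μ t a xl * γl xl al * q af *
            (Rf t (xl, xfh t) (al, af) +
              δ * ∑ xf' : Xf, Qf (xfh t) (al, af) xf' *
                V (t + 1) (upd a t (al, af)) xf'))
        = ∑ al, ∑ af, q af * c al af := by
    intro q
    rw [hc]
    exact rearrange2 δ (μ t a) γl q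
      (fun xl al af => Rf t (xl, xfh t) (al, af))
      (fun al af xf' => Qf (xfh t) (al, af) xf')
      (fun al af xf' => V (t + 1) (upd a t (al, af)) xf')
  -- value of an arbitrary follower strategy is ≤ prescription value of its time-t marginal
  have hle : ∀ (σf : ℕ → (ℕ → Al × Af) → (ℕ → Xf) → Af → ℝ),
      (∀ n a' xfh', (∀ af, 0 ≤ σf n a' xfh' af) ∧ ∑ af, σf n a' xfh' af = 1) →
      (∑ xl, μ t a xl * rtgFd σl' σf Ql Qf Rf δ (T - t) t a xfh xl)
        ≤ ∑ al, ∑ af, σf t a xfh af * c al af := by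
    intro σf hσf
    rw [hVal σf, hc]
    refine Finset.sum_le_sum fun al _ => Finset.sum_le_sum fun af _ => ?_
    refine mul_le_mul_of_nonneg_left ?_ ((hσf t a xfh).1 af)
    refine add_le_add le_rfl (mul_le_mul_of_nonneg_left ?_ hδ0)
    refine Finset.sum_le_sum fun xf' _ => ?_
    refine mul_le_mul_of_nonneg_left ?_ ((hQf (xfh t) (al, af)).1 xf')
    refine mul_le_mul_of_nonneg_left ?_
      (Finset.sum_nonneg fun xl _ => mul_nonneg ((hμ t a).1 xl) ((hγl xl).1 al))
    rw [← hW al af xf']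
    exact hopt σf hσf (upd a t (al, af)) (upd xfh (t + 1) xf')
  -- value of the embedded prescription strategy equals the prescription value
  have hEq : ∀ q : Af → ℝ,
      (∑ xl, μ t a xl * rtgFd σl'
          (fun n a' xfh' af => if n = t then q af else σtf n a' xfh' af)
          Ql Qf Rf δ (T - t) t a xfh xl)
        = ∑ al, ∑ af, q af * c al af := by
    intro q
    set σfq : ℕ → (ℕ → Al × Af) → (ℕ → Xf) → Af → ℝ :=
      fun n a' xfh' af => if n = t then q af else σtf n a' xfh' af with hσfq
    rw [hVal σfq, hc]
    refine Finset.sum_congr rfl fun al _ => Finset.sum_congr rfl fun af _ => ?_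
    have hq : σfq t a xfh af = q af := if_pos rfl
    have hWq : ∀ xf' : Xf, (∑ xl', μ (t + 1) (upd a t (al, af)) xl' *
        rtgFd σtl σfq Ql Qf Rf δ (T - (t + 1)) (t + 1)
          (upd a t (al, af)) (upd xfh (t + 1) xf') xl')
        = V (t + 1) (upd a t (al, af)) xf' := by
      intro xf'
      rw [← hW al af xf']
      refine Finset.sum_congr rfl fun xl' _ => ?_
      rw [rtgFd_congr σtl σtl σfq σtf Ql Qf Rf δ (T - (t + 1)) (t + 1)
        (fun m _ => rfl)
        (fun m hm => by
          funext a' xfh' af'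
          exact if_neg (by omega))]
    rw [hq]
    simp only [hWq]
  -- the two sets
  set S1 : Set ℝ := {r : ℝ | ∃ q : Af → ℝ, ((∀ af, 0 ≤ q af) ∧ ∑ af, q af = 1) ∧
      r = ∑ xl : Xl, ∑ al : Al, ∑ af : Af,
        μ t a xl * γl xl al * q af *
          (Rf t (xl, xfh t) (al, af) +
            δ * ∑ xf' : Xf, Qf (xfh t) (al, af) xf' *
              V (t + 1) (upd a t (al, af)) xf')} with hS1
  set S2 : Set ℝ := {r : ℝ | ∃ σf : ℕ → (ℕ → Al × Af) → (ℕ → Xf) → Af → ℝ,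
      (∀ n a' xfh', (∀ af, 0 ≤ σf n a' xfh' af) ∧ ∑ af, σf n a' xfh' af = 1) ∧
      r = ∑ xl, μ t a xl * rtgFd σl' σf Ql Qf Rf δ (T - t) t a xfh xl} with hS2
  -- bound
  have hbound : ∀ q : Af → ℝ, (∀ af, 0 ≤ q af) → (∑ af, q af = 1) →
      (∑ al, ∑ af, q af * c al af) ≤ ∑ al, ∑ af, |c al af| := by
    intro q hq0 hq1
    refine Finset.sum_le_sum fun al _ => Finset.sum_le_sum fun af _ => ?_
    calc q af * c al af ≤ q af * |c al af| :=
          mul_le_mul_of_nonneg_left (le_abs_self _) (hq0 af)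
      _ ≤ 1 * |c al af| := by
          refine mul_le_mul_of_nonneg_right ?_ (abs_nonneg _)
          rw [← hq1]
          exact Finset.single_le_sum (fun af' _ => hq0 af') (Finset.mem_univ af)
      _ = |c al af| := one_mul _
  have hbdd1 : BddAbove S1 := by
    refine ⟨∑ al, ∑ af, |c al af|, fun r hr => ?_⟩
    obtain ⟨q, ⟨hq0, hq1⟩, rfl⟩ := hr
    rw [hPq q]
    exact hbound q hq0 hq1
  have hbdd2 : BddAbove S2 := by
    refine ⟨∑ al, ∑ af, |c al af|, fun r hr => ?_⟩
    obtain ⟨σf, hσf, rfl⟩ := hr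
    exact le_trans (hle σf hσf) (hbound _ (hσf t a xfh).1 (hσf t a xfh).2)
  -- embedding: prescriptions give valid strategies
  have hqvalid : ∀ q : Af → ℝ, (∀ af, 0 ≤ q af) → (∑ af, q af = 1) →
      ∀ n a' xfh', (∀ af, 0 ≤ (fun n a' xfh' af =>
          if n = t then q af else σtf n a' xfh' af) n a' xfh' af) ∧
        ∑ af, (fun n a' xfh' af =>
          if n = t then q af else σtf n a' xfh' af) n a' xfh' af = 1 := by
    intro q hq0 hq1 n a' xfh'
    constructor
    · intro af
      dsimp only
      split
      · exact hq0 af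
      · exact (hσtf n a' xfh').1 af
    · dsimp only
      split
      · exact hq1
      · exact (hσtf n a' xfh').2
  have hmem12 : ∀ r ∈ S1, r ∈ S2 := by
    intro r hr
    obtain ⟨q, ⟨hq0, hq1⟩, rfl⟩ := hr
    refine ⟨fun n a' xfh' af => if n = t then q af else σtf n a' xfh' af,
      hqvalid q hq0 hq1, ?_⟩
    rw [hPq q, ← hEq q]
  -- nonemptiness
  obtain ⟨af0⟩ := ‹Nonempty Af›
  have hq0mem : ((fun af => if af = af0 then (1:ℝ) else 0) : Af → ℝ) ∈
      {q : Af → ℝ | (∀ af, 0 ≤ q af) ∧ ∑ af, q af = 1} := by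
    constructor
    · intro af; dsimp only; split <;> norm_num
    · simp
  have hne1 : S1.Nonempty := ⟨_, ⟨_, hq0mem, rfl⟩⟩
  have hne2 : S2.Nonempty := hne1.imp fun r hr => hmem12 r hr
  -- conclusion
  refine le_antisymm ?_ ?_
  · exact csSup_le hne1 fun r hr => le_csSup hbdd2 (hmem12 r hr)
  · refine csSup_le hne2 fun r hr => ?_
    obtain ⟨σf, hσf, rfl⟩ := hr
    have h1 : (∑ xl, μ t a xl * rtgFd σl' σf Ql Qf Rf δ (T - t) t a xfh xl)
        ≤ ∑ al, ∑ af, σf t a xfh af * c al af := hle σf hσf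
    rw [← hPq (σf t a xfh)] at h1
    exact le_trans h1 (le_csSup hbdd1 ⟨σf t a xfh, ⟨(hσf t a xfh).1, (hσf t a xfh).2⟩, rfl⟩)


end
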